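/- Let ℓ ≥ 1 and let n_1, …, n_ℓ be integers with n_i ≥ 2 for all i. Then there is at most one index j ∈ {1,…,ℓ} such that the string (n_1, …, n_{j−1}, n_j − 1, n_{j+1}, …, n_ℓ) has a well-defined negative continued fraction value equal to 0; moreover, for such an index j, necessarily n_j = 2. -/

import Mathlib

/-- Negative continued fraction: `ncf [a₁,…,a_k] = a₁ - 1/ncf [a₂,…,a_k]` and `ncf [a] = a`
(it is well-defined provided every proper suffix has nonzero value; otherwise the
junk value `1/0 = 0` of ℚ is used). -/
def ncf : List ℤ → ℚ
  | [] => 0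
  | a :: l => (a : ℚ) - 1 / ncf l

/-- The string m has a well-defined negative continued fraction value equal to 0:
every nonempty proper suffix has nonzero value, and the value of m itself is 0. -/
def NcfWellDefZero (m : List ℤ) : Prop :=
  (∀ s : List ℤ, s ≠ [] → s <:+ m → s ≠ m → ncf s ≠ 0) ∧ ncf m = 0



def Kp : List ℤ → ℤ × ℤ
  | [] => (1, 0)
  | a :: l => (a * (Kp l).1 - (Kp l).2, (Kp l).1)

def K1 (l : List ℤ) : ℤ := (Kp l).1
def K2 (l : List ℤ) : ℤ := (Kp l).2

@[simp] lemma K1_nil : K1 [] = 1 := rfl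
@[simp] lemma K2_nil : K2 [] = 0 := rfl
@[simp] lemma K1_cons (a : ℤ) (l : List ℤ) : K1 (a :: l) = a * K1 l - K2 l := rfl
@[simp] lemma K2_cons (a : ℤ) (l : List ℤ) : K2 (a :: l) = K1 l := rfl

def Qc : List ℤ → ℤ
  | [] => 0
  | a :: l => K1 ((a :: l).dropLast)

@[simp] lemma Qc_nil : Qc [] = 0 := rfl

lemma Qc_ne (l : List ℤ) (h : l ≠ []) : Qc l = K1 l.dropLast := by
  cases l with
  | nil => simp at h
  | cons a t => rfl

lemma Qc_cons (a : ℤ) (x : List ℤ) (hx : x ≠ []) :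
    Qc (a :: x) = a * Qc x - Qc x.tail := by
  obtain ⟨b, x', rfl⟩ := List.exists_cons_of_ne_nil hx
  cases x' with
  | nil => simp [Qc, K1, Kp]
  | cons c y => rfl

lemma detE : ∀ x : List ℤ, x ≠ [] → Qc x * K2 x - K1 x * Qc x.tail = 1 := by
  intro x
  induction x with
  | nil => simp
  | cons a x' ih =>
    intro _
    by_cases hx' : x' = []
    · subst hx'; simp [Qc, Kp, K1, K2]
    · rw [Qc_cons a x' hx', K2_cons, K1_cons, List.tail_cons]
      linear_combination ih hx'

lemma k1_qc_coprime (x : List ℤ) : IsCoprime (K1 x) (Qc x) := by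
  by_cases hx : x = []
  · subst hx; simpa using isCoprime_one_left
  · exact ⟨-Qc x.tail, K2 x, by linear_combination detE x hx⟩

lemma k_coprime : ∀ l : List ℤ, IsCoprime (K1 l) (K2 l) := by
  intro l
  induction l with
  | nil => simpa using isCoprime_one_left
  | cons a t ih =>
    obtain ⟨u, v, huv⟩ := ih
    exact ⟨-v, u + v * a, by rw [K1_cons, K2_cons]; linear_combination huv⟩

lemma k_pos : ∀ l : List ℤ, (∀ a ∈ l, 2 ≤ a) → 0 ≤ K2 l ∧ K2 l < K1 l := by
  intro l
  induction l with
  | nil => simp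
  | cons a t ih =>
    intro h
    have ht := ih (fun b hb => h b (List.mem_cons_of_mem a hb))
    have ha : 2 ≤ a := h a List.mem_cons_self
    rw [K1_cons, K2_cons]
    constructor
    · linarith [ht.1, ht.2]
    · nlinarith [ht.1, ht.2]

lemma k1_append : ∀ (x w : List ℤ), K1 (x ++ w) = K1 x * K1 w - Qc x * K2 w
  | [], w => by simp
  | [a], w => by simp [Qc, K1, K2, Kp]
  | a :: b :: x, w => by
    have ih1 := k1_append (b :: x) w
    have ih2 := k1_append x w
    have e1 : K1 ((a :: b :: x) ++ w) = a * K1 ((b :: x) ++ w) - K1 (x ++ w) := rfl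
    have e2 : K1 (a :: b :: x) = a * K1 (b :: x) - K1 x := rfl
    have e3 : Qc (a :: b :: x) = a * Qc (b :: x) - Qc x := Qc_cons a (b :: x) (by simp)
    rw [e1, e2, e3]
    linear_combination a * ih1 - ih2

lemma k1_reverse : ∀ l : List ℤ, K1 l.reverse = K1 l
  | [] => rfl
  | [a] => by simp [Kp, K1, K2]
  | a :: b :: l => by
    have ih1 := k1_reverse (b :: l)
    have ih2 := k1_reverse l
    have h1 : (a :: b :: l).reverse = (b :: l).reverse ++ [a] := by simp
    rw [h1, k1_append]
    have hq : Qc ((b :: l).reverse) = K1 l := by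
      rw [Qc_ne _ (by simp)]
      have hd : ((b :: l).reverse).dropLast = l.reverse := by
        rw [show (b :: l).reverse = l.reverse ++ [b] by simp, List.dropLast_concat]
      rw [hd, ih2]
    rw [hq, ih1]
    have e2 : K1 [a] = a := by simp [K1, Kp]
    have e3 : K2 [a] = 1 := rfl
    have e : K1 (a :: b :: l) = a * K1 (b :: l) - K1 l := rfl
    rw [e2, e3, e]
    ring

lemma ncf_eq : ∀ l : List ℤ,
    (∀ s : List ℤ, s ≠ [] → s <:+ l → s ≠ l → ncf s ≠ 0) →
    ncf l = (K1 l : ℚ) / (K2 l : ℚ) := by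
  intro l
  induction l with
  | nil => simp [ncf]
  | cons a t ih =>
    intro h
    by_cases ht : t = []
    · subst ht
      show (a : ℚ) - 1 / ncf [] = _
      simp [ncf, K1, K2, Kp]
    · have hsub : ∀ s : List ℤ, s ≠ [] → s <:+ t → s ≠ t → ncf s ≠ 0 := by
        intro s hs1 hs2 hs3
        refine h s hs1 (hs2.trans (List.suffix_cons a t)) ?_
        intro hsl
        have := hs2.length_le
        rw [hsl] at this
        simp at this
      have hT := ih hsub
      have hnt : ncf t ≠ 0 :=
        h t ht (List.suffix_cons a t) (Ne.symm (List.cons_ne_self a t))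
      have hK1t : (K1 t : ℚ) ≠ 0 := by
        intro h0
        rw [hT, h0] at hnt
        simp at hnt
      show (a : ℚ) - 1 / ncf t = _
      rw [hT, one_div_div, K1_cons, K2_cons]
      push_cast
      rw [sub_div, mul_div_cancel_right₀ _ hK1t]

lemma nwdz_K1 (m : List ℤ) (hm : m ≠ []) (h : NcfWellDefZero m) : K1 m = 0 := by
  obtain ⟨h1, h2⟩ := h
  have hrep := ncf_eq m h1
  rw [h2] at hrep
  have hK2 : (K2 m : ℚ) ≠ 0 := by
    obtain ⟨a, t, rfl⟩ := List.exists_cons_of_ne_nil hm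
    rw [K2_cons]
    by_cases ht : t = []
    · subst ht; norm_num
    · have hsub : ∀ s : List ℤ, s ≠ [] → s <:+ t → s ≠ t → ncf s ≠ 0 := by
        intro s hs1 hs2 hs3
        refine h1 s hs1 (hs2.trans (List.suffix_cons a t)) ?_
        intro hsl
        have := hs2.length_le
        rw [hsl] at this
        simp at this
      have hT := ncf_eq t hsub
      have hnt : ncf t ≠ 0 :=
        h1 t ht (List.suffix_cons a t) (Ne.symm (List.cons_ne_self a t))
      intro h0
      rw [hT, h0] at hnt
      simp at hnt
  have hq : (K1 m : ℚ) = 0 := by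
    rcases div_eq_zero_iff.mp hrep.symm with h' | h'
    · exact h'
    · exact absurd h' hK2
  exact_mod_cast hq

lemma cond_PS (l : List ℤ) (h2 : ∀ a ∈ l, 2 ≤ a) (j : ℕ) (hj : j < l.length)
    (h : K1 (l.set j (l[j]'hj - 1)) = 0) :
    K1 (l.take j) = K1 (l.drop (j + 1)) := by
  have hset : l.set j (l[j]'hj - 1) = l.take j ++ (l[j]'hj - 1) :: l.drop (j + 1) := by
    rw [List.set_eq_take_append_cons_drop, if_pos hj]
  set x := l.take j with hx
  set w := l.drop (j + 1) with hw
  set n := l[j]'hj with hn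
  have hxmem : ∀ a ∈ x, 2 ≤ a := fun a ha => h2 a (List.mem_of_mem_take ha)
  have hwmem : ∀ a ∈ w, 2 ≤ a := fun a ha => h2 a (List.mem_of_mem_drop ha)
  have hnge : 2 ≤ n := h2 _ (List.getElem_mem hj)
  set A := K1 x with hA
  set B := K1 w with hB
  have hzero : A * ((n - 1) * B - K2 w) - Qc x * B = 0 := by
    have := h
    rw [hset, k1_append, K1_cons, K2_cons] at this
    exact this
  have hxp := k_pos x hxmem
  have hwp := k_pos w hwmem
  have hnwp := k_pos (n :: w) (by
    intro a ha
    rcases List.mem_cons.mp ha with rfl | ha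
    · exact hnge
    · exact hwmem a ha)
  have hApos : 0 < A := lt_of_le_of_lt hxp.1 hxp.2
  have hBpos : 0 < B := lt_of_le_of_lt hwp.1 hwp.2
  set G := K1 (n :: w) with hG
  have hGB : B < G := by
    have := hnwp.2
    rwa [K2_cons] at this
  have key : A * (G - B) = Qc x * B := by
    have hGe : G = n * B - K2 w := by rw [hG, K1_cons]
    rw [hGe]
    linear_combination hzero
  have hcop1 : IsCoprime A (Qc x) := k1_qc_coprime x
  have hcop2 : IsCoprime B (G - B) := by
    have hc : IsCoprime G B := by
      have := k_coprime (n :: w)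
      rwa [K2_cons] at this
    have := hc.symm.add_mul_left_right (-1)
    simpa [mul_neg_one, ← sub_eq_add_neg] using this
  have hAB : A ∣ B := hcop1.dvd_of_dvd_mul_left ⟨G - B, key.symm⟩
  have hBA : B ∣ A := hcop2.dvd_of_dvd_mul_right ⟨Qc x, by rw [key]; ring⟩
  exact Int.dvd_antisymm hApos.le hBpos.le hAB hBA

lemma k1_cons_lt (a : ℤ) (u : List ℤ) (h : ∀ b ∈ a :: u, 2 ≤ b) : K1 u < K1 (a :: u) := by
  have hu := k_pos u (fun b hb => h b (List.mem_cons_of_mem a hb))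
  have ha : 2 ≤ a := h a List.mem_cons_self
  rw [K1_cons]
  nlinarith [hu.1, hu.2]

lemma k1_prepend_lt (v u : List ℤ) (hv : v ≠ []) (h : ∀ b ∈ v ++ u, 2 ≤ b) :
    K1 u < K1 (v ++ u) := by
  induction v with
  | nil => simp at hv
  | cons a v' ih =>
    by_cases hv' : v' = []
    · subst hv'
      exact k1_cons_lt a u (by simpa using h)
    · have h1 : K1 u < K1 (v' ++ u) := ih hv' (fun b hb => h b (by simp at hb ⊢; tauto))
      have hstep : K1 (v' ++ u) < K1 (a :: (v' ++ u)) := k1_cons_lt a (v' ++ u) (by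
        intro b hb
        apply h
        simpa using hb)
      calc K1 u < K1 (v' ++ u) := h1
        _ < K1 (a :: v' ++ u) := hstep


lemma take_lt_take (l : List ℤ) (h2 : ∀ a ∈ l, 2 ≤ a) {j k : ℕ} (hjk : j < k)
    (hk : k ≤ l.length) : K1 (l.take j) < K1 (l.take k) := by
  set mid := (l.take k).drop j with hmid
  have e : l.take j ++ mid = l.take k := by
    conv_rhs => rw [← List.take_append_drop j (l.take k)]
    rw [List.take_take, Nat.min_def, if_pos hjk.le]
  have hmidne : mid ≠ [] := by
    intro hnil
    have := congrArg List.length hnil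
    simp [hmid] at this
    omega
  have hrevne : mid.reverse ≠ [] := by simpa using hmidne
  have hmem : ∀ b ∈ mid.reverse ++ (l.take j).reverse, 2 ≤ b := by
    intro b hb
    rcases List.mem_append.mp hb with hb | hb
    · exact h2 b (List.mem_of_mem_take (List.mem_of_mem_drop (List.mem_reverse.mp hb)))
    · exact h2 b (List.mem_of_mem_take (List.mem_reverse.mp hb))
  have := k1_prepend_lt mid.reverse (l.take j).reverse hrevne hmem
  calc K1 (l.take j) = K1 ((l.take j).reverse) := (k1_reverse _).symm
    _ < K1 (mid.reverse ++ (l.take j).reverse) := this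
    _ = K1 ((l.take j ++ mid).reverse) := by rw [List.reverse_append]
    _ = K1 (l.take j ++ mid) := k1_reverse _
    _ = K1 (l.take k) := by rw [e]

lemma drop_lt_drop (l : List ℤ) (h2 : ∀ a ∈ l, 2 ≤ a) {j k : ℕ} (hjk : j < k)
    (hk : k < l.length) : K1 (l.drop (k + 1)) < K1 (l.drop (j + 1)) := by
  set mid := (l.drop (j + 1)).take (k - j) with hmid
  have e : mid ++ l.drop (k + 1) = l.drop (j + 1) := by
    have e2 : (l.drop (j + 1)).drop (k - j) = l.drop (k + 1) := by
      rw [List.drop_drop]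
      congr 1
      omega
    conv_rhs => rw [← List.take_append_drop (k - j) (l.drop (j + 1))]
    rw [e2]
  have hmidne : mid ≠ [] := by
    intro hnil
    have := congrArg List.length hnil
    simp [hmid] at this
    omega
  have hmem : ∀ b ∈ mid ++ l.drop (k + 1), 2 ≤ b := by
    intro b hb
    rcases List.mem_append.mp hb with hb | hb
    · exact h2 b (List.mem_of_mem_drop (List.mem_of_mem_take hb))
    · exact h2 b (List.mem_of_mem_drop hb)
  have := k1_prepend_lt mid (l.drop (k + 1)) hmidne hmem
  calc K1 (l.drop (k + 1)) < K1 (mid ++ l.drop (k + 1)) := this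
    _ = K1 (l.drop (j + 1)) := by rw [e]

lemma no_two_aux (l : List ℤ) (h2 : ∀ a ∈ l, 2 ≤ a) {j k : ℕ} (hjk : j < k)
    (hk : k < l.length)
    (Hj : K1 (l.take j) = K1 (l.drop (j + 1)))
    (Hk : K1 (l.take k) = K1 (l.drop (k + 1))) : False := by
  have h1 := take_lt_take l h2 hjk hk.le
  have h3 := drop_lt_drop l h2 hjk hk
  omega

/-- For a string of integers ≥ 2, at most one single-entry decrement produces a string
with well-defined negative continued fraction value 0, and the decremented entry must be 2. -/
theorem stmt_15 (l : List ℤ) (hl : 1 ≤ l.length) (h2 : ∀ a ∈ l, 2 ≤ a) :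
    (∀ j k : ℕ, ∀ hj : j < l.length, ∀ hk : k < l.length,
      NcfWellDefZero (l.set j (l[j]'hj - 1)) → NcfWellDefZero (l.set k (l[k]'hk - 1)) →
      j = k) ∧
    (∀ j : ℕ, ∀ hj : j < l.length,
      NcfWellDefZero (l.set j (l[j]'hj - 1)) → l[j]'hj = 2) := by
  have hne_nil : ∀ (j : ℕ) (v : ℤ), l.set j v ≠ [] := by
    intro j v he
    have := congrArg List.length he
    rw [List.length_set, List.length_nil] at this
    omega
  constructor
  · intro j k hj hk hmj hmk
    have Hj := cond_PS l h2 j hj (nwdz_K1 _ (hne_nil j _) hmj)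
    have Hk := cond_PS l h2 k hk (nwdz_K1 _ (hne_nil k _) hmk)
    rcases lt_trichotomy j k with hlt | heq | hgt
    · exact absurd (no_two_aux l h2 hlt hk Hj Hk) (not_false)
    · exact heq
    · exact absurd (no_two_aux l h2 hgt hj Hk Hj) (not_false)
  · intro j hj hmj
    have hK := nwdz_K1 _ (hne_nil j _) hmj
    by_contra hne
    have hge : 2 ≤ l[j]'hj := h2 _ (List.getElem_mem hj)
    have h3 : 3 ≤ l[j]'hj := by omega
    have hmem : ∀ a ∈ l.set j (l[j]'hj - 1), 2 ≤ a := by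
      intro a ha
      rcases List.mem_or_eq_of_mem_set ha with ha | rfl
      · exact h2 a ha
      · omega
    have := k_pos _ hmem
    omega
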